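/- Let X = U Σ Vᵀ be a compact SVD of X ∈ ℝ^{d×n} with rank n (Σ ∈ ℝ^{n×n} invertible diagonal, UᵀU = I_n). Let f: ℝ → ℝ with f(η) = 0, extended to symmetric matrices via the spectrum. Then for any symmetric S ∈ ℝ^{n×n}, tr(f(η I_d + X S Xᵀ)) = tr(f(Σ Vᵀ S V Σ + η I_n)). -/

import Mathlib

open Matrix

open Polynomial in
/-- For a real symmetric matrix, `det (t • 1 - A) = ∏ (t - λᵢ)`. -/
lemma det_smul_one_sub_eq_prod {m : ℕ} {A : Matrix (Fin m) (Fin m) ℝ} (hA : A.IsHermitian)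
    (t : ℝ) : det (t • (1 : Matrix (Fin m) (Fin m) ℝ) - A) = ∏ i, (t - hA.eigenvalues i) := by
  set W := (hA.eigenvectorUnitary : Matrix (Fin m) (Fin m) ℝ) with hW
  have hWW : W * star W = 1 := by
    exact Matrix.mem_unitaryGroup_iff.mp hA.eigenvectorUnitary.2
  have hkey : t • (1 : Matrix (Fin m) (Fin m) ℝ) - A
      = W * (t • (1 : Matrix (Fin m) (Fin m) ℝ)
          - diagonal (RCLike.ofReal ∘ hA.eigenvalues)) * star W := by
    rw [Matrix.mul_sub, Matrix.sub_mul]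
    conv_lhs => rw [hA.spectral_theorem, Unitary.conjStarAlgAut_apply]
    congr 1
    rw [Matrix.mul_smul, Matrix.smul_mul, mul_one, hWW]
  rw [hkey, det_mul, det_mul, mul_comm (det W), mul_assoc, ← det_mul, hWW, det_one, mul_one]
  have : t • (1 : Matrix (Fin m) (Fin m) ℝ) - diagonal (RCLike.ofReal ∘ hA.eigenvalues)
      = diagonal (fun i => t - hA.eigenvalues i) := by
    rw [Matrix.smul_one_eq_diagonal, ← Matrix.diagonal_sub]
    rfl
  rw [this, det_diagonal]

/-- Weinstein–Aronszajn-type determinant identity. -/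
lemma det_smul_one_sub_conj {d n : ℕ} (U : Matrix (Fin d) (Fin n) ℝ)
    (M : Matrix (Fin n) (Fin n) ℝ) (hU : Uᵀ * U = 1) (hdn : n ≤ d) {t : ℝ} (ht : t ≠ 0) :
    det (t • (1 : Matrix (Fin d) (Fin d) ℝ) - U * M * Uᵀ)
      = t ^ (d - n) * det (t • (1 : Matrix (Fin n) (Fin n) ℝ) - M) := by
  have h1 : t • (1 : Matrix (Fin d) (Fin d) ℝ) - U * M * Uᵀ
      = t • ((1 : Matrix (Fin d) (Fin d) ℝ) + U * ((-t⁻¹) • M) * Uᵀ) := by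
    rw [smul_add]
    congr 1
    rw [Matrix.mul_smul, Matrix.smul_mul, smul_smul]
    have : t * -t⁻¹ = -1 := by field_simp
    rw [this, neg_one_smul, sub_eq_add_neg]
  have h2 : det ((1 : Matrix (Fin d) (Fin d) ℝ) + U * ((-t⁻¹) • M) * Uᵀ)
      = det ((1 : Matrix (Fin n) (Fin n) ℝ) + (-t⁻¹) • M) := by
    rw [Matrix.mul_assoc, Matrix.det_one_add_mul_comm, Matrix.mul_assoc, hU, mul_one]
  have h3 : (1 : Matrix (Fin n) (Fin n) ℝ) + (-t⁻¹) • M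
      = t⁻¹ • (t • (1 : Matrix (Fin n) (Fin n) ℝ) - M) := by
    rw [smul_sub, smul_smul, inv_mul_cancel₀ ht, one_smul, sub_eq_add_neg, neg_smul]
  rw [h1, det_smul, h2, h3, det_smul]
  simp only [Fintype.card_fin]
  have h4 : t ^ d * t⁻¹ ^ n = t ^ (d - n) := by
    rw [inv_pow, pow_sub₀ t ht hdn]
  rw [← mul_assoc, h4]

open Polynomial in
theorem trace_spectral_function_reduction {d n : ℕ}
    (f : ℝ → ℝ) (η : ℝ) (hfη : f η = 0)
    (U : Matrix (Fin d) (Fin n) ℝ) (σ : Fin n → ℝ) (V : Matrix (Fin n) (Fin n) ℝ)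
    (hU : Uᵀ * U = 1) (hV : Vᵀ * V = 1) (hσ : ∀ i, σ i ≠ 0)
    (X : Matrix (Fin d) (Fin n) ℝ) (hX : X = U * Matrix.diagonal σ * Vᵀ)
    (S : Matrix (Fin n) (Fin n) ℝ) (hS : Sᵀ = S)
    (hA : (η • (1 : Matrix (Fin d) (Fin d) ℝ) + X * S * Xᵀ).IsHermitian)
    (hB : (Matrix.diagonal σ * Vᵀ * S * V * Matrix.diagonal σ
            + η • (1 : Matrix (Fin n) (Fin n) ℝ)).IsHermitian) :
    ∑ i, f (hA.eigenvalues i) = ∑ i, f (hB.eigenvalues i) := by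
  classical
  -- n ≤ d
  have hdn : n ≤ d := by
    have h1 : ((1 : Matrix (Fin n) (Fin n) ℝ)).rank = n := by simp [Matrix.rank_one]
    have h2 : (Uᵀ * U).rank ≤ U.rank := Matrix.rank_mul_le_right _ _
    have h3 : U.rank ≤ d := (Matrix.rank_le_card_height U).trans (by simp)
    rw [hU] at h2
    omega
  set M : Matrix (Fin n) (Fin n) ℝ :=
    Matrix.diagonal σ * Vᵀ * S * V * Matrix.diagonal σ with hM
  have hXSX : X * S * Xᵀ = U * M * Uᵀ := by
    subst hX
    rw [Matrix.transpose_mul, Matrix.transpose_mul, Matrix.transpose_transpose,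
      Matrix.diagonal_transpose, hM]
    simp only [Matrix.mul_assoc]
  -- evaluation identity
  have key : ∀ t : ℝ, t ≠ η →
      ∏ i, (t - hA.eigenvalues i) = (t - η) ^ (d - n) * ∏ i, (t - hB.eigenvalues i) := by
    intro t ht
    have hs : t - η ≠ 0 := sub_ne_zero.mpr ht
    have hL : t • (1 : Matrix (Fin d) (Fin d) ℝ) - (η • 1 + X * S * Xᵀ)
        = (t - η) • (1 : Matrix (Fin d) (Fin d) ℝ) - U * M * Uᵀ := by
      rw [hXSX, sub_smul]; abel
    have hR : t • (1 : Matrix (Fin n) (Fin n) ℝ) - (M + η • 1)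
        = (t - η) • (1 : Matrix (Fin n) (Fin n) ℝ) - M := by
      rw [sub_smul]; abel
    rw [← det_smul_one_sub_eq_prod hA t, ← det_smul_one_sub_eq_prod hB t, hL, hR,
      det_smul_one_sub_conj U M hU hdn hs]
  -- polynomial identity
  set p : ℝ[X] := ∏ i, (Polynomial.X - Polynomial.C (hA.eigenvalues i)) with hp
  set q : ℝ[X] := (Polynomial.X - Polynomial.C η) ^ (d - n) *
      ∏ i, (Polynomial.X - Polynomial.C (hB.eigenvalues i)) with hq
  have hpq : p = q := by
    apply Polynomial.eq_of_infinite_eval_eq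
    apply Set.Infinite.mono (s := {η}ᶜ)
    · intro t ht
      have ht' : t ≠ η := ht
      simp only [Set.mem_setOf_eq, hp, hq, Polynomial.eval_mul, Polynomial.eval_pow,
        Polynomial.eval_prod, Polynomial.eval_sub, Polynomial.eval_X, Polynomial.eval_C]
      exact key t ht'
    · exact Set.Finite.infinite_compl (Set.finite_singleton η)
  -- extract root multisets
  have hproots : p.roots = Finset.univ.val.map hA.eigenvalues := by
    have : p = ((Finset.univ.val.map hA.eigenvalues).map
        fun a => Polynomial.X - Polynomial.C a).prod := by
      rw [hp, Multiset.map_map, Finset.prod_eq_multiset_prod]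
      rfl
    rw [this, Polynomial.roots_multiset_prod_X_sub_C]
  have hqroots : q.roots = Multiset.replicate (d - n) η
      + Finset.univ.val.map hB.eigenvalues := by
    have h1 : (∏ i, (Polynomial.X - Polynomial.C (hB.eigenvalues i)) : ℝ[X])
        = ((Finset.univ.val.map hB.eigenvalues).map
            fun a => Polynomial.X - Polynomial.C a).prod := by
      rw [Multiset.map_map, Finset.prod_eq_multiset_prod]
      rfl
    have hne1 : ((Polynomial.X - Polynomial.C η : ℝ[X]) ^ (d - n)) ≠ 0 :=
      pow_ne_zero _ (Polynomial.X_sub_C_ne_zero η)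
    have hne2 : (∏ i, (Polynomial.X - Polynomial.C (hB.eigenvalues i)) : ℝ[X]) ≠ 0 :=
      Finset.prod_ne_zero_iff.mpr fun i _ => Polynomial.X_sub_C_ne_zero _
    rw [hq, Polynomial.roots_mul (mul_ne_zero hne1 hne2), Polynomial.roots_pow,
      Polynomial.roots_X_sub_C, h1, Polynomial.roots_multiset_prod_X_sub_C,
      Multiset.nsmul_singleton]
  have hmult : Finset.univ.val.map hA.eigenvalues
      = Multiset.replicate (d - n) η + Finset.univ.val.map hB.eigenvalues := by
    rw [← hproots, ← hqroots, hpq]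
  -- conclude
  have hsumA : ∑ i, f (hA.eigenvalues i)
      = ((Finset.univ.val.map hA.eigenvalues).map f).sum := by
    rw [Multiset.map_map]; rfl
  have hsumB : ∑ i, f (hB.eigenvalues i)
      = ((Finset.univ.val.map hB.eigenvalues).map f).sum := by
    rw [Multiset.map_map]; rfl
  rw [hsumA, hsumB, hmult, Multiset.map_add, Multiset.sum_add, Multiset.map_replicate, hfη,
    Multiset.sum_replicate, smul_zero, zero_add]
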